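/- arXiv:2001.03275 — 4 statements merged into one kernel-verified Lean document; each statement's English description precedes it below -/
import Mathlib

section
/- Let V be a nonzero finite-dimensional complex vector space, let d ≥ 2 be an integer, and let A, B, C be endomorphisms of V satisfying the Jacobi relations B∘C = C∘B, C∘A = A∘C, and A∘B − B∘A = −d·C^{d−1}. Then C is nilpotent. -/
/-- If `V` is a nonzero finite-dimensional complex vector space, `d ≥ 2`,
and `A, B, C` are endomorphisms of `V` satisfying the Jacobi relations of the deformed
Weyl potential `W_d = [a,b]c + c^d`, namely `B∘C = C∘B`, `C∘A = A∘C`, and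
`A∘B − B∘A = −d·C^(d−1)`, then `C` is nilpotent. -/
theorem nilpotent_of_jacobi_relations
    (V : Type*) [AddCommGroup V] [Module ℂ V] [FiniteDimensional ℂ V] [Nontrivial V]
    (d : ℕ) (hd : 2 ≤ d) (A B C : Module.End ℂ V)
    (h1 : B * C = C * B) (h2 : C * A = A * C)
    (h3 : A * B - B * A = -((d : ℂ) • C ^ (d - 1))) :
    IsNilpotent C := by
  -- Step A: every eigenvalue of `C` is zero.
  have stepA : ∀ μ : ℂ, C.HasEigenvalue μ → μ = 0 := by
    intro μ hμ
    set W := C.maxGenEigenspace μ with hWdef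
    have hAm : Set.MapsTo A ↑W ↑W :=
      Module.End.mapsTo_maxGenEigenspace_of_comm h2 μ
    have hBm : Set.MapsTo B ↑W ↑W :=
      Module.End.mapsTo_maxGenEigenspace_of_comm h1.symm μ
    have hCm : Set.MapsTo C ↑W ↑W :=
      Module.End.mapsTo_maxGenEigenspace_of_comm (Commute.refl C) μ
    set A' := A.restrict hAm with hA'def
    set B' := B.restrict hBm with hB'def
    set C' := C.restrict hCm with hC'def
    have hpow : C' ^ (d - 1)
        = (C ^ (d - 1)).restrict (Module.End.pow_apply_mem_of_forall_mem (d - 1) hCm) :=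
      Module.End.pow_restrict _ _
    have hrel : A' * B' - B' * A' = -((d : ℂ) • C' ^ (d - 1)) := by
      ext x
      have hx := LinearMap.ext_iff.mp h3 (x : V)
      simp [hpow, A', B', C', Module.End.mul_apply, LinearMap.restrict_apply] at hx ⊢
      exact hx
    -- nilpotency of `C' - μ`
    have hnil : IsNilpotent (C' - algebraMap ℂ (Module.End ℂ W) μ) := by
      obtain ⟨k, hk⟩ := Module.End.isNilpotent_restrict_maxGenEigenspace_sub_algebraMap C μ
      refine ⟨k, ?_⟩
      have heq : C' - algebraMap ℂ (Module.End ℂ W) μ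
          = (C - algebraMap ℂ (Module.End ℂ V) μ).restrict
            (Module.End.mapsTo_maxGenEigenspace_of_comm
              (Algebra.mul_sub_algebraMap_commutes C μ) μ) := by
        ext x
        simp [C', LinearMap.restrict_apply, Module.algebraMap_end_apply]
        rfl
      rw [heq]
      exact hk
    -- trace of powers of `C'`
    have htr : ∀ k : ℕ, LinearMap.trace ℂ W (C' ^ k) = μ ^ k * (Module.finrank ℂ W : ℂ) := by
      intro k
      induction k with
      | zero => simp [LinearMap.trace_one]
      | succ k ih =>
        have h := LinearMap.trace_comp_eq_mul_of_commute_of_isNilpotent μ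
          ((Commute.refl C').pow_left k) hnil
        rw [← Module.End.mul_eq_comp, ← pow_succ] at h
        rw [h, ih]
        ring
    -- trace of the commutator is zero
    have t1 : LinearMap.trace ℂ W (A' * B' - B' * A') = 0 := by
      rw [map_sub, LinearMap.trace_mul_comm, sub_self]
    rw [hrel] at t1
    rw [map_neg, map_smul, htr (d - 1)] at t1
    -- `W` is nontrivial
    obtain ⟨x, hxW, hx0⟩ := hμ.exists_hasEigenvector
    have hxmem : x ∈ W := by
      rw [hWdef, Module.End.mem_maxGenEigenspace]
      refine ⟨1, ?_⟩
      have : C x = μ • x := Module.End.mem_eigenspace_iff.mp hxW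
      simp [this]
    have hWnt : Nontrivial W := by
      refine Submodule.nontrivial_iff_ne_bot.mpr fun hbot => hx0 ?_
      simpa [hbot] using hxmem
    have hfin : (Module.finrank ℂ W : ℂ) ≠ 0 :=
      Nat.cast_ne_zero.mpr (Module.finrank_pos (R := ℂ) (M := W)).ne'
    have hd0 : (d : ℂ) ≠ 0 := by
      exact_mod_cast (by omega : d ≠ 0)
    have hμpow : μ ^ (d - 1) = 0 := by
      rw [neg_eq_zero, smul_eq_mul] at t1
      rcases mul_eq_zero.mp t1 with h | h
      · exact absurd h hd0
      · rcases mul_eq_zero.mp h with h' | h'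
        · exact h'
        · exact absurd h' hfin
    exact pow_eq_zero_iff (by omega : d - 1 ≠ 0) |>.mp hμpow
  -- Step B: all roots of the minimal polynomial are zero, hence `C` is nilpotent.
  have hmono : (minpoly ℂ C).Monic := minpoly.monic (Algebra.IsIntegral.isIntegral (R := ℂ) C)
  have hsplit : Polynomial.Splits (minpoly ℂ C) :=
    IsAlgClosed.splits _
  have heq := hsplit.eq_prod_roots_of_monic hmono
  have hroots : ∀ a ∈ (minpoly ℂ C).roots, a = 0 := fun a ha =>
    stepA a (Module.End.hasEigenvalue_of_isRoot (Polynomial.isRoot_of_mem_roots ha))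
  have hX : minpoly ℂ C = Polynomial.X ^ Multiset.card (minpoly ℂ C).roots := by
    conv_lhs => rw [heq]
    rw [Multiset.map_congr rfl (fun a ha => by
      rw [hroots a ha, map_zero, sub_zero] : ∀ a ∈ (minpoly ℂ C).roots,
        Polynomial.X - Polynomial.C a = Polynomial.X)]
    rw [Multiset.map_const', Multiset.prod_replicate]
  refine ⟨Multiset.card (minpoly ℂ C).roots, ?_⟩
  have haev := minpoly.aeval ℂ C
  rw [hX, map_pow, Polynomial.aeval_X] at haev
  exact haev
end

section
/- Let V be a nonzero finite-dimensional complex vector space, let d ≥ 2 be an integer, and let A, B, C be endomorphisms of V satisfying the Jacobi relations B∘C = C∘B, C∘A = A∘C, and A∘B − B∘A = −d·C^{d−1}. Suppose that every subspace of V invariant under A, B and C admits a complementary subspace invariant under A, B and C. Then C = 0 and A∘B = B∘A. -/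
open LinearMap Module

/-- If on a nontrivial finite-dimensional complex space we have `A*B - B*A = -(d • C^(d-1))`
with `d ≥ 2` and `C - μ • 1` nilpotent, then `μ = 0`. -/
lemma jacobi_aux_eigenvalue_zero {E : Type*} [AddCommGroup E] [Module ℂ E]
    [FiniteDimensional ℂ E] [Nontrivial E] {d : ℕ} (hd : 2 ≤ d)
    {A B C : Module.End ℂ E}
    (h3 : A * B - B * A = -((d : ℂ) • C ^ (d - 1))) {μ : ℂ}
    (hnil : IsNilpotent (C - μ • 1)) : μ = 0 := by
  have hcomm : Commute C ((μ : ℂ) • (1 : Module.End ℂ E)) :=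
    (Commute.one_right C).smul_right μ
  have hfac := hcomm.mul_geom_sum₂ (d - 1)
  have ha : Commute (C - μ • 1) C := (Commute.refl C).sub_left hcomm.symm
  have hb : Commute (C - μ • 1) ((μ : ℂ) • (1 : Module.End ℂ E)) :=
    hcomm.sub_left (Commute.refl _)
  have hS : Commute (C - μ • 1)
      (∑ i ∈ Finset.range (d - 1), C ^ i * (μ • (1 : Module.End ℂ E)) ^ (d - 1 - 1 - i)) :=
    Commute.sum_right _ _ _ (fun i _ => (ha.pow_right i).mul_right (hb.pow_right _))
  have hn2 : IsNilpotent (C ^ (d - 1) - (μ • (1 : Module.End ℂ E)) ^ (d - 1)) := by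
    rw [← hfac]
    exact hS.isNilpotent_mul_right hnil
  have htr : trace ℂ E (C ^ (d - 1) - (μ • (1 : Module.End ℂ E)) ^ (d - 1)) = 0 :=
    (LinearMap.isNilpotent_trace_of_isNilpotent hn2).eq_zero
  have htrC : trace ℂ E (C ^ (d - 1)) = μ ^ (d - 1) * (finrank ℂ E : ℂ) := by
    have h1 : (μ • (1 : Module.End ℂ E)) ^ (d - 1) = μ ^ (d - 1) • 1 := by
      rw [smul_pow, one_pow]
    rw [map_sub, h1, map_smul, trace_one, sub_eq_zero] at htr
    simpa [smul_eq_mul] using htr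
  have h0 : trace ℂ E (A * B - B * A) = 0 := by
    rw [map_sub, trace_mul_comm, sub_self]
  rw [h3] at h0
  have : (d : ℂ) * (μ ^ (d - 1) * (finrank ℂ E : ℂ)) = 0 := by
    have := h0
    rw [map_neg, map_smul, htrC, neg_eq_zero, smul_eq_mul] at this
    exact this
  have hd0 : (d : ℂ) ≠ 0 := Nat.cast_ne_zero.mpr (by omega)
  have hfr : (finrank ℂ E : ℂ) ≠ 0 := by
    have : 0 < finrank ℂ E := finrank_pos
    exact_mod_cast this.ne'
  have hμpow : μ ^ (d - 1) = 0 := by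
    rcases mul_eq_zero.mp this with h | h
    · exact absurd h hd0
    · rcases mul_eq_zero.mp h with h | h
      · exact h
      · exact absurd h hfr
  exact pow_eq_zero_iff (by omega) |>.mp hμpow

/-- Let `V` be a nonzero finite-dimensional complex vector space, `d ≥ 2`,
and `A, B, C` endomorphisms of `V` satisfying the Jacobi relations `B∘C = C∘B`,
`C∘A = A∘C`, `A∘B − B∘A = −d·C^(d−1)`.  If every subspace of `V` invariant under
`A`, `B` and `C` admits a complementary subspace invariant under `A`, `B` and `C`
(i.e. the representation is semisimple), then `C = 0` and `A∘B = B∘A`. -/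
theorem semisimple_jacobi_representation_commutes
    (V : Type*) [AddCommGroup V] [Module ℂ V] [FiniteDimensional ℂ V] [Nontrivial V]
    (d : ℕ) (hd : 2 ≤ d) (A B C : Module.End ℂ V)
    (h1 : B * C = C * B) (h2 : C * A = A * C)
    (h3 : A * B - B * A = -((d : ℂ) • C ^ (d - 1)))
    (hss : ∀ W : Submodule ℂ V,
      (∀ v ∈ W, A v ∈ W) → (∀ v ∈ W, B v ∈ W) → (∀ v ∈ W, C v ∈ W) →
      ∃ W' : Submodule ℂ V, IsCompl W W' ∧
        (∀ v ∈ W', A v ∈ W') ∧ (∀ v ∈ W', B v ∈ W') ∧ (∀ v ∈ W', C v ∈ W')) :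
    C = 0 ∧ A * B = B * A := by
  classical
  -- Step 1: every eigenvalue of C is zero
  have hzero : ∀ μ : ℂ, Module.End.HasEigenvalue C μ → μ = 0 := by
    intro μ hμ
    set E := C.maxGenEigenspace μ with hE
    have hCA : Commute C A := h2
    have hCB : Commute C B := h1.symm
    have hmA : ∀ x ∈ E, A x ∈ E := Module.End.mapsTo_maxGenEigenspace_of_comm hCA μ
    have hmB : ∀ x ∈ E, B x ∈ E := Module.End.mapsTo_maxGenEigenspace_of_comm hCB μ
    have hmC : ∀ x ∈ E, C x ∈ E := Module.End.mapsTo_maxGenEigenspace_of_comm (Commute.refl C) μ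
    -- E is nontrivial
    obtain ⟨v, hv⟩ := hμ.exists_hasEigenvector
    have hvE : v ∈ E := by
      have : v ∈ C.eigenspace μ := hv.1
      exact (C.genEigenspace μ).monotone le_top this
    haveI : Nontrivial E := Submodule.nontrivial_iff_ne_bot.mpr
      (fun h => hv.2 (by simpa [h] using hvE))
    -- restricted endomorphisms
    set A' := A.restrict hmA with hA'
    set B' := B.restrict hmB with hB'
    set C' := C.restrict hmC with hC'
    have hpow : ∀ (x : E), ((C' ^ (d-1)) x : V) = (C ^ (d-1)) (x : V) := by
      intro x
      rw [hC', Module.End.pow_restrict, LinearMap.restrict_coe_apply]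
    have h3' : A' * B' - B' * A' = -((d : ℂ) • C' ^ (d - 1)) := by
      ext x
      have hx := LinearMap.congr_fun h3 (x : V)
      simpa [A', B', C', LinearMap.sub_apply, Module.End.mul_apply, LinearMap.neg_apply, LinearMap.smul_apply, LinearMap.restrict_coe_apply, hpow] using hx
    have hnil : IsNilpotent (C' - μ • 1) := by
      have hmap : Set.MapsTo (C - algebraMap ℂ (Module.End ℂ V) μ) E E :=
        Module.End.mapsTo_maxGenEigenspace_of_comm
          (Algebra.mul_sub_algebraMap_commutes C μ) μ
      have hnil' := Module.End.isNilpotent_restrict_maxGenEigenspace_sub_algebraMap C μ hmap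
      have heq : C' - μ • 1 = (C - algebraMap ℂ (Module.End ℂ V) μ).restrict hmap := by
        ext x
        simp [C', LinearMap.restrict_coe_apply, Module.algebraMap_end_apply]
        rfl
      rw [heq]
      exact hnil'
    exact jacobi_aux_eigenvalue_zero hd h3' hnil
  -- Step 2: ker C is invariant
  have hkA : ∀ v ∈ LinearMap.ker C, A v ∈ LinearMap.ker C := by
    intro v hv
    rw [LinearMap.mem_ker] at hv ⊢
    have := LinearMap.congr_fun h2 v
    simp only [Module.End.mul_apply] at this
    rw [this, hv, map_zero]
  have hkB : ∀ v ∈ LinearMap.ker C, B v ∈ LinearMap.ker C := by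
    intro v hv
    rw [LinearMap.mem_ker] at hv ⊢
    have := LinearMap.congr_fun h1 v
    simp only [Module.End.mul_apply] at this
    rw [← this, hv, map_zero]
  have hkC : ∀ v ∈ LinearMap.ker C, C v ∈ LinearMap.ker C := by
    intro v hv
    rw [LinearMap.mem_ker] at hv ⊢
    rw [hv, map_zero]
  obtain ⟨W', hcompl, hA', hB', hC'⟩ := hss (LinearMap.ker C) hkA hkB hkC
  -- Step 3: W' = ⊥
  have hW' : W' = ⊥ := by
    by_contra hne
    haveI : Nontrivial W' := Submodule.nontrivial_iff_ne_bot.mpr hne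
    have hmC' : Set.MapsTo C W' W' := hC'
    obtain ⟨μ', hμ'⟩ := Module.End.exists_eigenvalue (C.restrict hmC')
    obtain ⟨x, hx⟩ := hμ'.exists_hasEigenvector
    have hCx : C (x : V) = μ' • (x : V) := by
      have := hx.apply_eq_smul
      exact congrArg Subtype.val this
    have hxne : (x : V) ≠ 0 := fun h => hx.2 (Subtype.ext h)
    have hEig : Module.End.HasEigenvalue C μ' :=
      Module.End.hasEigenvalue_of_hasEigenvector
        ⟨Module.End.mem_eigenspace_iff.mpr hCx, hxne⟩
    have hμ0 : μ' = 0 := hzero μ' hEig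
    have hxk : (x : V) ∈ LinearMap.ker C := by
      rw [LinearMap.mem_ker, hCx, hμ0, zero_smul]
    have : (x : V) ∈ (⊥ : Submodule ℂ V) := by
      rw [← hcompl.inf_eq_bot]
      exact ⟨hxk, x.2⟩
    exact hxne (by simpa using this)
  have hker : LinearMap.ker C = ⊤ := by
    have := hcompl.sup_eq_top
    rw [hW', sup_bot_eq] at this
    exact this
  have hC0 : C = 0 := LinearMap.ker_eq_top.mp hker
  refine ⟨hC0, ?_⟩
  have hCpow : C ^ (d - 1) = 0 := by
    rw [hC0]
    exact zero_pow (by omega)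
  rw [hCpow, smul_zero, neg_zero, sub_eq_zero] at h3
  exact h3
end

section
/- Let V be a vector space over a field K and let α, β be endomorphisms of V such that [β, [β, α]] = 0, where [f, g] = f∘g − g∘f. Then α maps the generalized kernel of β, i.e. the subspace ⋃_{k ∈ ℕ} ker(β^k), into itself. In particular, if v ∈ ker(β^m) then α(v) ∈ ker(β^{m+1}). -/
/-- Let `V` be a vector space over a field `K` and `α, β` endomorphisms of
`V` with `[β, [β, α]] = 0`, where `[f, g] = f∘g − g∘f`.  Then `α` maps the generalized
kernel `⋃ₖ ker(β^k)` of `β` into itself; in particular, if `v ∈ ker(β^m)` then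
`α(v) ∈ ker(β^(m+1))`. -/
theorem maps_generalized_kernel_of_commutator_commutes
    (K V : Type*) [Field K] [AddCommGroup V] [Module K V]
    (α β : Module.End K V)
    (h : β * (β * α - α * β) - (β * α - α * β) * β = 0) :
    (∀ v ∈ ⨆ k : ℕ, LinearMap.ker (β ^ k), α v ∈ ⨆ k : ℕ, LinearMap.ker (β ^ k)) ∧
    (∀ m : ℕ, ∀ v ∈ LinearMap.ker (β ^ m), α v ∈ LinearMap.ker (β ^ (m + 1))) := by
  set γ : Module.End K V := β * α - α * β with hγ
  have hcomm : β * γ = γ * β := sub_eq_zero.mp h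
  have key : ∀ n : ℕ, β ^ (n + 1) * α = α * β ^ (n + 1) + (n + 1) • (γ * β ^ n) := by
    intro n
    induction n with
    | zero =>
      simp [pow_one, pow_zero, hγ]
    | succ n ih =>
      have h2 : β ^ (n + 2) * α = β * (β ^ (n + 1) * α) := by
        rw [← mul_assoc, ← pow_succ']
      rw [h2, ih]
      have hβγ : β * (γ * β ^ n) = γ * β ^ (n + 1) := by
        rw [← mul_assoc, hcomm, mul_assoc, ← pow_succ', pow_succ]
      have hβα : β * α = α * β + γ := by rw [hγ]; abel
      rw [mul_add, mul_smul_comm, hβγ, ← mul_assoc, hβα, add_mul, mul_assoc, ← pow_succ',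
        add_assoc]
      congr 1
      rw [succ_nsmul (γ * β ^ (n + 1)) (n + 1)]
      exact (add_comm _ _)
  have main : ∀ m : ℕ, ∀ v ∈ LinearMap.ker (β ^ m), α v ∈ LinearMap.ker (β ^ (m + 1)) := by
    intro m v hv
    rw [LinearMap.mem_ker] at hv ⊢
    have h1 : (β ^ (m + 1) * α) v = (α * β ^ (m + 1) + (m + 1) • (γ * β ^ m)) v := by
      rw [key m]
    simpa [Module.End.mul_apply, pow_succ', hv] using h1
  refine ⟨?_, main⟩
  intro v hv
  have hdir : Directed (· ≤ ·) fun k : ℕ => LinearMap.ker (β ^ k) := by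
    intro i j
    refine ⟨max i j, ?_, ?_⟩
    · intro x hx
      rw [LinearMap.mem_ker] at hx ⊢
      rw [← Nat.sub_add_cancel (le_max_left i j), pow_add, Module.End.mul_apply, hx, map_zero]
    · intro x hx
      rw [LinearMap.mem_ker] at hx ⊢
      rw [← Nat.sub_add_cancel (le_max_right i j), pow_add, Module.End.mul_apply, hx, map_zero]
  obtain ⟨k, hk⟩ := (Submodule.mem_iSup_of_directed (fun _ => LinearMap.ker _) hdir).mp hv
  exact Submodule.mem_iSup_of_mem (k + 1) (main k v hk)
end

section
/- Let T be a topological space equipped with a continuous action of the group ℂ* of nonzero complex numbers, let d ≥ 1 be an integer, and let g : T → ℂ be a continuous function satisfying g(u • t) = u^d · g(t) for all u ∈ ℂ* and t ∈ T. Let T₁ = {t ∈ T : g(t) = 1} and let T̃ = {(t, z) ∈ T × ℂ : g(t) = exp(z)}. Then the map T₁ × ℂ → T̃ sending (t, z) to (exp(z/d) • t, z) is a homeomorphism, with inverse sending (t, z) to (exp(−z/d) • t, z). -/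
/-- Let `T` be a topological space with a continuous action of `ℂ*`,
`d ≥ 1`, and `g : T → ℂ` a continuous function with `g(u • t) = u^d · g(t)`.
Let `T₁ = {t : g t = 1}` and `T̃ = {(t, z) : g t = exp z}` (the pullback of `exp`
along `g`).  Then the map `T₁ × ℂ → T̃`, `(t, z) ↦ (exp(z/d) • t, z)`, is a
homeomorphism, with inverse `(t, z) ↦ (exp(−z/d) • t, z)`. -/
theorem nearby_fiber_trivialization
    (T : Type*) [TopologicalSpace T] [MulAction ℂˣ T] [ContinuousSMul ℂˣ T]
    (d : ℕ) (hd : 1 ≤ d) (g : T → ℂ) (hg : Continuous g)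
    (heq : ∀ (u : ℂˣ) (t : T), g (u • t) = (u : ℂ) ^ d * g t) :
    ∃ e : ({t : T // g t = 1} × ℂ) ≃ₜ {p : T × ℂ // g p.1 = Complex.exp p.2},
      (∀ p : {t : T // g t = 1} × ℂ,
        (e p : T × ℂ) =
          (Units.mk0 (Complex.exp (p.2 / d)) (Complex.exp_ne_zero _) • p.1.1, p.2)) ∧
      (∀ q : {p : T × ℂ // g p.1 = Complex.exp p.2},
        ((e.symm q).1 : T) =
          Units.mk0 (Complex.exp (-(q : T × ℂ).2 / d)) (Complex.exp_ne_zero _) • (q : T × ℂ).1 ∧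
        (e.symm q).2 = (q : T × ℂ).2) := by
  have hd0 : (d : ℂ) ≠ 0 := Nat.cast_ne_zero.mpr (by omega)
  have hpow : ∀ z : ℂ, Complex.exp (z / d) ^ d = Complex.exp z := by
    intro z
    rw [← Complex.exp_nat_mul, mul_div_cancel₀ _ hd0]
  set u : ℂ → ℂˣ := fun z => Units.mk0 (Complex.exp (z / d)) (Complex.exp_ne_zero _)
    with hu
  set v : ℂ → ℂˣ := fun z => Units.mk0 (Complex.exp (-z / d)) (Complex.exp_ne_zero _)
    with hv
  have hvu : ∀ z, v z * u z = 1 := by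
    intro z
    refine Units.ext ?_
    simp only [hu, hv, Units.val_mul, Units.val_mk0, Units.val_one, ← Complex.exp_add]
    rw [neg_div, neg_add_cancel, Complex.exp_zero]
  have huv : ∀ z, u z * v z = 1 := by
    intro z
    refine Units.ext ?_
    simp only [hu, hv, Units.val_mul, Units.val_mk0, Units.val_one, ← Complex.exp_add]
    rw [neg_div, add_neg_cancel, Complex.exp_zero]
  have hucont : Continuous u := by
    rw [Units.continuous_iff]
    constructor
    · exact Complex.continuous_exp.comp (continuous_id.div_const _)
    · have : (fun z => ((u z)⁻¹ : ℂˣ) • (1 : ℂ)) = fun z => Complex.exp (-(z / d)) := by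
        funext z
        simp [hu, Units.smul_def, ← Complex.exp_neg]
      simpa [Units.smul_def] using
        (Complex.continuous_exp.comp ((continuous_id.div_const (d : ℂ)).neg))
          |>.congr fun z => by simp [hu, ← Complex.exp_neg]
  have hvcont : Continuous v := by
    rw [Units.continuous_iff]
    constructor
    · exact Complex.continuous_exp.comp (continuous_id.neg.div_const _)
    · exact (Complex.continuous_exp.comp ((continuous_id.neg.div_const (d : ℂ)).neg))
        |>.congr fun z => by simp [hv, ← Complex.exp_neg]
  refine ⟨{
      toFun := fun p => ⟨(u p.2 • p.1.1, p.2), by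
        rw [heq]
        simp [hu, hpow, p.1.2]⟩
      invFun := fun q => ⟨⟨v (q : T × ℂ).2 • (q : T × ℂ).1, by
        rw [heq]
        have := hpow (-(q : T × ℂ).2)
        simp only [hv, Units.val_mk0, this, q.2, ← Complex.exp_add, neg_add_cancel,
          Complex.exp_zero]⟩, (q : T × ℂ).2⟩
      left_inv := by
        rintro ⟨⟨t, ht⟩, z⟩
        ext
        · show v z • u z • t = t
          rw [smul_smul, hvu, one_smul]
        · rfl
      right_inv := by
        rintro ⟨⟨t, z⟩, hq⟩
        ext
        · show u z • v z • t = t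
          rw [smul_smul, huv, one_smul]
        · rfl
      continuous_toFun := by
        refine Continuous.subtype_mk ?_ _
        exact ((hucont.comp continuous_snd).smul
          ((continuous_subtype_val.comp continuous_fst))).prodMk continuous_snd
      continuous_invFun := by
        have h1 : Continuous fun q : {p : T × ℂ // g p.1 = Complex.exp p.2} =>
            (q : T × ℂ).2 := (continuous_snd.comp continuous_subtype_val)
        have h2 : Continuous fun q : {p : T × ℂ // g p.1 = Complex.exp p.2} =>
            (q : T × ℂ).1 := (continuous_fst.comp continuous_subtype_val)
        exact ((Continuous.subtype_mk ((hvcont.comp h1).smul h2) _)).prodMk h1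
    }, ?_, ?_⟩
  · intro p; rfl
  · intro q; exact ⟨rfl, rfl⟩
end
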